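/- Suppose in addition that N ∈ ℚ[[x]] satisfies N · (1 − x³M) = 1. Then x·N^p + (x³ − x − 1)·N + 1 = 0. -/

import Mathlib

open PowerSeries

/-- Equation (13): if `N (1 − x³M) = 1` then `x N^p + (x³ − x − 1) N + 1 = 0`. -/
theorem stmt10 (p : ℕ) (hp : 2 ≤ p) (M : ℕ → PowerSeries ℚ)
    (N : PowerSeries ℚ)
    (hM : ∀ i, 1 ≤ i → i ≤ p - 1 →
      M i - 1 = X * (∏ j ∈ Finset.Icc i (p - 1), M j) +
        X ^ 3 * (∏ j ∈ Finset.Icc i (p - 1), M j) *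
          ((∏ j ∈ Finset.Icc 1 i, M j) - 1))
    (hN : N * (1 - X ^ 3 * ∏ j ∈ Finset.Icc 1 (p - 1), M j) = 1) :
    X * N ^ p + (X ^ 3 - X - 1) * N + 1 = 0 := by
  obtain ⟨q, rfl⟩ : ∃ q, p = q + 2 := ⟨p - 2, by omega⟩
  have h21 : q + 2 - 1 = q + 1 := by omega
  simp only [h21] at hM hN
  -- Key unit relation for each `M i`
  have hA : ∀ i, 1 ≤ i → i ≤ q + 1 →
      M i * ((1 - X ^ 3 * ∏ j ∈ Finset.Icc 1 (q + 1), M j)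
        - (X - X ^ 3) * ∏ j ∈ Finset.Icc (i + 1) (q + 1), M j) = 1 := by
    intro i hi1 hi2
    have h1 := hM i hi1 hi2
    have e1 : (∏ j ∈ Finset.Icc i (q + 1), M j)
        = M i * ∏ j ∈ Finset.Icc (i + 1) (q + 1), M j := by
      rw [show Finset.Icc i (q + 1) = insert i (Finset.Icc (i + 1) (q + 1)) from by
        ext x; simp only [Finset.mem_Icc, Finset.mem_insert]; omega]
      rw [Finset.prod_insert (by simp only [Finset.mem_Icc]; omega)]
    have e2 : (∏ j ∈ Finset.Icc 1 i, M j) * (∏ j ∈ Finset.Icc (i + 1) (q + 1), M j)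
        = ∏ j ∈ Finset.Icc 1 (q + 1), M j := by
      rw [← Finset.prod_union (by
        rw [Finset.disjoint_left]; intro a ha hb
        simp only [Finset.mem_Icc] at ha hb; omega)]
      congr 1
      ext x; simp only [Finset.mem_Icc, Finset.mem_union]; omega
    rw [e1] at h1
    rw [← e2]
    linear_combination h1
  -- The downward induction invariant
  have hJ : ∀ k, k ≤ q + 1 →
      (∏ j ∈ Finset.Icc (q + 2 - k) (q + 1), M j) *
        ((X - X ^ 3) * N ^ (k + 1) + 1 - N - (X - X ^ 3) * N)
      = N ^ k * (1 - N) := by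
    intro k
    induction k with
    | zero =>
      intro _
      rw [Nat.sub_zero, Finset.Icc_eq_empty (by omega), Finset.prod_empty]
      ring
    | succ k ih =>
      intro hk
      have ihk := ih (by omega)
      have hi1 : 1 ≤ q + 1 - k := by omega
      have hi2 : q + 1 - k ≤ q + 1 := by omega
      have hidx : q + 2 - (k + 1) = q + 1 - k := by omega
      have hidx2 : q + 2 - k = (q + 1 - k) + 1 := by omega
      rw [hidx2] at ihk
      rw [hidx]
      have hAi := hA (q + 1 - k) hi1 hi2
      have e1 : (∏ j ∈ Finset.Icc (q + 1 - k) (q + 1), M j)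
          = M (q + 1 - k) * ∏ j ∈ Finset.Icc ((q + 1 - k) + 1) (q + 1), M j := by
        rw [show Finset.Icc (q + 1 - k) (q + 1)
            = insert (q + 1 - k) (Finset.Icc ((q + 1 - k) + 1) (q + 1)) from by
          ext x; simp only [Finset.mem_Icc, Finset.mem_insert]; omega]
        rw [Finset.prod_insert (by simp only [Finset.mem_Icc]; omega)]
      rw [e1]
      -- key algebraic step
      have key : (∏ j ∈ Finset.Icc ((q + 1 - k) + 1) (q + 1), M j) *
            ((X - X ^ 3) * N ^ (k + 1 + 1) + 1 - N - (X - X ^ 3) * N)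
          = N ^ (k + 1) * (1 - N) *
            ((1 - X ^ 3 * ∏ j ∈ Finset.Icc 1 (q + 1), M j)
              - (X - X ^ 3) * ∏ j ∈ Finset.Icc ((q + 1 - k) + 1) (q + 1), M j) := by
        linear_combination ihk - N ^ k * (1 - N) * hN
      linear_combination M (q + 1 - k) * key + N ^ (k + 1) * (1 - N) * hAi
  -- instantiate at k = q + 1
  have hfin := hJ (q + 1) le_rfl
  rw [show q + 2 - (q + 1) = 1 from by omega] at hfin
  -- M ≠ 0 via constant coefficient
  have hc : ∀ i, 1 ≤ i → i ≤ q + 1 → constantCoeff (M i) = 1 := by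
    intro i hi1 hi2
    have := congrArg constantCoeff (hM i hi1 hi2)
    simp at this
    linarith [this]
  have hMne : (∏ j ∈ Finset.Icc 1 (q + 1), M j) ≠ 0 := by
    intro h
    have : constantCoeff (∏ j ∈ Finset.Icc 1 (q + 1), M j) = 1 := by
      rw [map_prod]
      apply Finset.prod_eq_one
      intro i hi
      simp only [Finset.mem_Icc] at hi
      exact hc i hi.1 hi.2
    rw [h] at this
    simp at this
  have hz : (∏ j ∈ Finset.Icc 1 (q + 1), M j) *
      (X * N ^ (q + 2) + (X ^ 3 - X - 1) * N + 1) = 0 := by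
    linear_combination hfin - N ^ (q + 1) * hN
  have := mul_left_cancel₀ hMne (by rw [mul_zero]; exact hz :
    (∏ j ∈ Finset.Icc 1 (q + 1), M j) * (X * N ^ (q + 2) + (X ^ 3 - X - 1) * N + 1)
      = (∏ j ∈ Finset.Icc 1 (q + 1), M j) * 0)
  exact this
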